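/- Let G be a finite p-group with U a cyclic normal subgroup of G contained in H ≤ G, and set H' = { h ∈ H | [h,H] ⊆ U }. Then a subgroup V ∈ C(H) (i.e., V cyclic with U ≤ V and (V:U) = p) is normal in H if and only if V ≤ H'; hence C'(H) = C(H'). -/

import Mathlib

open scoped commutatorElement

theorem artin_stmt4 {G : Type*} [Group G] [Finite G] {p : ℕ}
    (hp : p.Prime) (hG : IsPGroup p G) (U H H' : Subgroup G) [U.Normal]
    (hUc : IsCyclic U) (hUH : U ≤ H)
    (hH' : ∀ g : G, g ∈ H' ↔ g ∈ H ∧ ∀ k ∈ H, ⁅g, k⁆ ∈ U) :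
    (∀ V : Subgroup G, V ≤ H → IsCyclic ↥V → U ≤ V → U.relIndex V = p →
      ((V.subgroupOf H).Normal ↔ V ≤ H')) ∧
    {V : Subgroup G | V ≤ H ∧ IsCyclic ↥V ∧ U ≤ V ∧ U.relIndex V = p ∧
        (V.subgroupOf H).Normal} =
      {V : Subgroup G | V ≤ H' ∧ IsCyclic ↥V ∧ U ≤ V ∧ U.relIndex V = p} := by
  have hH'H : H' ≤ H := fun g hg => ((hH' g).mp hg).1
  haveI : Fact p.Prime := ⟨hp⟩
  have main : ∀ V : Subgroup G, V ≤ H → IsCyclic ↥V → U ≤ V → U.relIndex V = p →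
      ((V.subgroupOf H).Normal ↔ V ≤ H') := by
    intro V hVH hVc hUV hrel
    constructor
    · intro hN
      have hconj : ∀ k ∈ H, ∀ v ∈ V, k * v * k⁻¹ ∈ V := by
        intro k hk v hv
        have h1 : (⟨v, hVH hv⟩ : ↥H) ∈ V.subgroupOf H := Subgroup.mem_subgroupOf.mpr hv
        have h2 := hN.conj_mem _ h1 ⟨k, hk⟩
        exact Subgroup.mem_subgroupOf.mp h2
      obtain ⟨g', hg'⟩ := hVc.exists_generator
      set g : G := (g' : G) with hgdef
      have hgV : g ∈ V := g'.2
      have hrep : ∀ v ∈ V, ∃ a : ℤ, g ^ a = v := by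
        intro v hv
        obtain ⟨a, ha⟩ := hg' ⟨v, hv⟩
        refine ⟨a, ?_⟩
        have := congrArg (Subtype.val) ha
        simpa using this
      -- the index of U in V is p, so g^p ∈ U
      have hKN : (U.subgroupOf V).Normal := by
        constructor
        intro n hn x
        have hc : Commute x n := by
          obtain ⟨a, ha⟩ := hg' x
          obtain ⟨b, hb⟩ := hg' n
          rw [← ha, ← hb]
          exact (Commute.refl g').zpow_zpow a b
        have : x * n * x⁻¹ = n := by rw [hc.eq, mul_inv_cancel_right]
        rwa [this]
      have hgp : g ^ p ∈ U := by
        have h1 := Subgroup.pow_index_mem (U.subgroupOf V) g'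
        have h2 : (U.subgroupOf V).index = p := hrel
        rw [h2] at h1
        have h3 : ((g' ^ p : ↥V) : G) ∈ U := Subgroup.mem_subgroupOf.mp h1
        simpa using h3
      -- p divides the order of g
      have hord : orderOf g = Nat.card ↥V := by
        have h1 : orderOf g' = Nat.card ↥V := orderOf_eq_card_of_forall_mem_zpowers hg'
        rw [← h1]
        exact orderOf_injective V.subtype V.subtype_injective g'
      have hpdvd : p ∣ orderOf g := by
        rw [hord]
        have := Subgroup.index_mul_card (U.subgroupOf V)
        have h2 : (U.subgroupOf V).index = p := hrel
        rw [h2] at this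
        exact ⟨Nat.card ↥(U.subgroupOf V), this.symm⟩
      -- now fix k ∈ H
      have key : ∀ v ∈ V, ∀ k ∈ H, ⁅v, k⁆ ∈ U := by
        intro v hv k hk
        obtain ⟨r, hr⟩ := hrep _ (hconj k hk g hgV)
        obtain ⟨n, hn⟩ := hG k
        have iter : ∀ m : ℕ, k ^ m * g * (k ^ m)⁻¹ = g ^ (r ^ m) := by
          intro m
          induction m with
          | zero => simp
          | succ m ih =>
            have e1 : k ^ (m + 1) * g * (k ^ (m + 1))⁻¹
                = k * (k ^ m * g * (k ^ m)⁻¹) * k⁻¹ := by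
              rw [pow_succ']
              group
            rw [e1, ih]
            calc k * g ^ (r ^ m) * k⁻¹ = (k * g * k⁻¹) ^ (r ^ m) := (conj_zpow).symm
              _ = (g ^ r) ^ (r ^ m) := by rw [hr]
              _ = g ^ (r * r ^ m) := (zpow_mul g r (r ^ m)).symm
              _ = g ^ (r ^ (m + 1)) := by rw [← pow_succ']
        have hfix : g ^ (r ^ (p ^ n) : ℤ) = g := by
          have := iter (p ^ n)
          rw [hn, one_mul, inv_one, mul_one] at this
          exact this.symm
        have hdvd1 : (orderOf g : ℤ) ∣ r ^ (p ^ n) - 1 := by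
          rw [orderOf_dvd_iff_zpow_eq_one, zpow_sub, hfix, zpow_one, mul_inv_cancel]
        have hpdvd2 : (p : ℤ) ∣ r - 1 := by
          have h1 : (p : ℤ) ∣ r ^ (p ^ n) - 1 :=
            dvd_trans (Int.natCast_dvd_natCast.mpr hpdvd) hdvd1
          have h2 : ((r ^ (p ^ n) - 1 : ℤ) : ZMod p) = 0 :=
            (ZMod.intCast_zmod_eq_zero_iff_dvd _ p).mpr h1
          push_cast at h2
          have h3 : ((r : ZMod p)) ^ (p ^ n) = (r : ZMod p) := ZMod.pow_card_pow _
          rw [h3] at h2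
          have h4 : ((r - 1 : ℤ) : ZMod p) = 0 := by push_cast; rw [sub_eq_zero]; linear_combination h2
          exact (ZMod.intCast_zmod_eq_zero_iff_dvd _ p).mp h4
        obtain ⟨t, ht⟩ := hpdvd2
        have hgr1 : g ^ (r - 1) ∈ U := by
          rw [ht, zpow_mul, zpow_natCast]
          exact Subgroup.zpow_mem U hgp t
        obtain ⟨a, ha⟩ := hrep v hv
        have h1 : k * v * k⁻¹ = g ^ (r * a) := by
          rw [← ha]
          calc k * g ^ a * k⁻¹ = (k * g * k⁻¹) ^ a := (conj_zpow).symm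
            _ = (g ^ r) ^ a := by rw [hr]
            _ = g ^ (r * a) := (zpow_mul g r a).symm
        have h2 : ⁅v, k⁆ = v * (k * v * k⁻¹)⁻¹ := by
          rw [commutatorElement_def]; group
        rw [h2, h1, ← ha, ← zpow_neg, ← zpow_add]
        have h3 : a + -(r * a) = (r - 1) * (-a) := by ring
        rw [h3, zpow_mul]
        exact Subgroup.zpow_mem U hgr1 (-a)
      intro v hv
      exact (hH' v).mpr ⟨hVH hv, fun k hk => key v hv k hk⟩
    · intro hVH'
      constructor
      intro n hn x
      rw [Subgroup.mem_subgroupOf] at hn ⊢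
      have hcU : ⁅(n : G), (x : G)⁆ ∈ U := ((hH' n).mp (hVH' hn)).2 x x.2
      have e : (↑(x * n * x⁻¹) : G) = ⁅(n : G), (x : G)⁆⁻¹ * (n : G) := by
        push_cast
        rw [commutatorElement_def]
        group
      rw [e]
      exact mul_mem (inv_mem (hUV hcU)) hn
  refine ⟨main, ?_⟩
  ext V
  simp only [Set.mem_setOf_eq]
  constructor
  · rintro ⟨h1, h2, h3, h4, h5⟩
    exact ⟨(main V h1 h2 h3 h4).mp h5, h2, h3, h4⟩
  · rintro ⟨h1, h2, h3, h4⟩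
    have hVH : V ≤ H := h1.trans hH'H
    exact ⟨hVH, h2, h3, h4, (main V hVH h2 h3 h4).mpr h1⟩
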